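/- Let K ⊆ ℝ^n be a nonempty compact convex set with support function f(w) = sup_{u ∈ K} ⟨w, u⟩, let ε > 0, η > 0 and t ∈ ℝ^n. Then the proximal problem for the conjugate g*(s) = ε · min_{u ∈ K} ‖s − u‖₁ satisfies the duality identity min_{s ∈ ℝ^n} ( ε · min_{u ∈ K} ‖s − u‖₁ + (1/(2η))‖s − t‖₂² ) = max_{w ∈ [−ε, ε]^n} ( − f(w) + ⟨w, t⟩ − (η/2)‖w‖₂² ), and both the minimum and the maximum are attained. -/

import Mathlib

/-- clamp to `[-ε, ε]` -/
noncomputable def clampR (ε x : ℝ) : ℝ := min ε (max (-ε) x)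

lemma clampR_abs_le {ε : ℝ} (hε : 0 < ε) (x : ℝ) : |clampR ε x| ≤ ε := by
  rw [abs_le, clampR]
  constructor
  · exact le_min (by linarith) (le_max_left _ _)
  · exact min_le_left _ _
  
lemma clampR_lip {ε : ℝ} (x y : ℝ) : |clampR ε x - clampR ε y| ≤ |x - y| := by
  have h1 : x - y ≤ |x - y| := le_abs_self _
  have h2 : y - x ≤ |x - y| := by rw [abs_sub_comm]; exact le_abs_self _
  rw [abs_sub_le_iff]
  unfold clampR
  constructor <;>
  · rw [min_def, min_def, max_def, max_def]
    split_ifs <;> linarith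

lemma clampR_hi {ε η a : ℝ} (hε : 0 < ε) (hη : 0 < η) (h : η * ε ≤ a) :
    clampR ε (a / η) = ε := by
  have : ε ≤ a / η := (le_div_iff₀ hη).mpr (by linarith [mul_comm η ε])
  rw [clampR, max_eq_right (by linarith), min_eq_left this]

lemma clampR_lo {ε η a : ℝ} (hε : 0 < ε) (hη : 0 < η) (h : a ≤ -(η * ε)) :
    clampR ε (a / η) = -ε := by
  have : a / η ≤ -ε := (div_le_iff₀ hη).mpr (by nlinarith)
  rw [clampR, max_eq_left this, min_eq_right (by linarith)]

lemma clampR_mid {ε η a : ℝ} (hε : 0 < ε) (hη : 0 < η) (h1 : -(η*ε) ≤ a) (h2 : a ≤ η * ε) :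
    clampR ε (a / η) = a / η := by
  have l1 : -ε ≤ a / η := by rw [le_div_iff₀ hη]; nlinarith
  have l2 : a / η ≤ ε := by rw [div_le_iff₀ hη]; nlinarith
  rw [clampR, max_eq_right l1, min_eq_right l2]

/-- per-coordinate dual optimality: clamp maximizes w*a - (η/2)w² over |w| ≤ ε -/
lemma coordA {ε η : ℝ} (hε : 0 < ε) (hη : 0 < η) (a w : ℝ) (hw : |w| ≤ ε) :
    w * a - (η/2) * w^2 ≤ clampR ε (a/η) * a - (η/2) * (clampR ε (a/η))^2 := by
  rw [abs_le] at hw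
  rcases le_or_gt (η * ε) a with h | h
  · rw [clampR_hi hε hη h]; nlinarith [sq_nonneg (ε - w)]
  rcases le_or_gt a (-(η*ε)) with h' | h'
  · rw [clampR_lo hε hη h']; nlinarith [sq_nonneg (ε + w)]
  · rw [clampR_mid hε hη h'.le h.le]
    have : 0 ≤ (a/η - w)^2 := sq_nonneg _
    have hne : η ≠ 0 := ne_of_gt hη
    field_simp
    nlinarith [sq_nonneg (a - η * w)]

/-- per-coordinate weak duality -/
lemma coordW {ε η : ℝ} (hε : 0 < ε) (hη : 0 < η) (a v w : ℝ) (hw : |w| ≤ ε) :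
    w * a - (η/2) * w^2 ≤ ε * |v| + (1/(2*η)) * (v - a)^2 := by
  have h1 : w * v ≤ ε * |v| := by
    calc w * v ≤ |w * v| := le_abs_self _
    _ = |w| * |v| := abs_mul _ _
    _ ≤ ε * |v| := by apply mul_le_mul_of_nonneg_right hw (abs_nonneg _)
  have h2 : w * (a - v) ≤ (η/2) * w^2 + (1/(2*η)) * (v - a)^2 := by
    have key : (η/2) * w^2 + (1/(2*η)) * (v - a)^2 - w * (a - v)
        = (1/(2*η)) * (a - v - η*w)^2 := by field_simp; ring
    have pos : 0 ≤ (1/(2*η)) * (a - v - η*w)^2 := by positivity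
    linarith
  nlinarith
  
/-- per-coordinate tightness: ε|v*| = c·v* for v* = a - ηc -/
lemma coordEq {ε η : ℝ} (hε : 0 < ε) (hη : 0 < η) (a : ℝ) :
    ε * |a - η * clampR ε (a/η)| = clampR ε (a/η) * (a - η * clampR ε (a/η)) := by
  rcases le_or_gt (η * ε) a with h | h
  · rw [clampR_hi hε hη h, abs_of_nonneg (by nlinarith)]
  rcases le_or_gt a (-(η*ε)) with h' | h'
  · rw [clampR_lo hε hη h', abs_of_nonpos (by nlinarith)]; ring
  · rw [clampR_mid hε hη h'.le h.le]
    have hne : η ≠ 0 := ne_of_gt hη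
    field_simp
    simp

lemma aux_le_zero {A C : ℝ} (hC : 0 ≤ C) (h : ∀ τ : ℝ, 0 < τ → τ ≤ 1 → A ≤ τ * C) : A ≤ 0 := by
  by_contra h'
  push_neg at h'
  have hCp : 0 < C + 1 := by linarith
  have hτpos : 0 < min 1 (A / (2 * (C + 1))) := lt_min one_pos (by positivity)
  have := h _ hτpos (min_le_left _ _)
  have hτle : min 1 (A / (2 * (C + 1))) ≤ A / (2 * (C + 1)) := min_le_right _ _
  have : A ≤ (A / (2 * (C + 1))) * C := this.trans (mul_le_mul_of_nonneg_right hτle hC)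
  rw [div_mul_eq_mul_div, le_div_iff₀ (by linarith)] at this
  nlinarith

/-- the per-coordinate objective summed: ψ(u) = Φ(u, clamp((t-u)/η)) -/
noncomputable def psiF {n : ℕ} (ε η : ℝ) (t : Fin n → ℝ) (u : Fin n → ℝ) : ℝ :=
  ∑ j, (clampR ε ((t j - u j)/η) * (t j - u j) - (η/2) * (clampR ε ((t j - u j)/η))^2)

lemma psiF_cont {n : ℕ} (ε η : ℝ) (t : Fin n → ℝ) : Continuous (psiF (n := n) ε η t) := by
  have hcl : Continuous (clampR ε) := continuous_const.min (continuous_const.max continuous_id)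
  apply continuous_finset_sum
  intro j _
  have hgj : Continuous fun u : Fin n → ℝ => clampR ε ((t j - u j)/η) :=
    hcl.comp ((continuous_const.sub (continuous_apply j) : Continuous fun u : Fin n → ℝ => t j - u j).div_const η)
  exact (hgj.mul (continuous_const.sub (continuous_apply j))).sub
    (continuous_const.mul (hgj.pow 2))

lemma phi_le_psiF {n : ℕ} {ε η : ℝ} (hε : 0 < ε) (hη : 0 < η) (t u w : Fin n → ℝ)
    (hw : ∀ j, |w j| ≤ ε) :
    ∑ j, (w j * (t j - u j) - (η/2) * (w j)^2) ≤ psiF ε η t u :=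
  Finset.sum_le_sum fun j _ => coordA hε hη _ _ (hw j)

/-- variational inequality at the minimizer of ψ over K:
    the clamped dual vector w0 satisfies ⟨w0, u⟩ ≤ ⟨w0, u0⟩ for all u ∈ K. -/
lemma VI_main {n : ℕ} {K : Set (Fin n → ℝ)} (hKconv : Convex ℝ K) {ε η : ℝ}
    (hε : 0 < ε) (hη : 0 < η) (t : Fin n → ℝ) {u0 : Fin n → ℝ} (hu0K : u0 ∈ K)
    (hmin : ∀ u ∈ K, psiF ε η t u0 ≤ psiF ε η t u)
    {u : Fin n → ℝ} (hu : u ∈ K) :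
    ∑ j, clampR ε ((t j - u0 j)/η) * u j ≤ ∑ j, clampR ε ((t j - u0 j)/η) * u0 j := by
  set w0 : Fin n → ℝ := fun j => clampR ε ((t j - u0 j)/η) with hw0
  set d : Fin n → ℝ := fun j => u j - u0 j with hd
  set C : ℝ := (∑ j, (d j)^2) / η with hC
  have hC0 : 0 ≤ C := by
    apply div_nonneg _ hη.le
    exact Finset.sum_nonneg fun j _ => sq_nonneg _
  have key : ∀ τ : ℝ, 0 < τ → τ ≤ 1 → (∑ j, w0 j * d j) ≤ τ * C := by
    intro τ hτ0 hτ1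
    set uτ : Fin n → ℝ := fun j => u0 j + τ * d j with huτ
    have huτK : uτ ∈ K := by
      have h := hKconv hu0K hu (by linarith : (0:ℝ) ≤ 1 - τ) hτ0.le (by ring)
      have : (1 - τ) • u0 + τ • u = uτ := by
        funext j
        simp only [Pi.add_apply, Pi.smul_apply, smul_eq_mul, huτ, hd]
        ring
      rwa [this] at h
    set wτ : Fin n → ℝ := fun j => clampR ε ((t j - uτ j)/η) with hwτ
    have hA : psiF ε η t u0 ≤ psiF ε η t uτ := hmin _ huτK
    have hB : psiF ε η t uτ =
        (∑ j, (wτ j * (t j - u0 j) - (η/2) * (wτ j)^2)) - τ * ∑ j, wτ j * d j := by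
      rw [psiF, Finset.mul_sum, ← Finset.sum_sub_distrib]
      apply Finset.sum_congr rfl
      intro j _
      simp only [hwτ, huτ]
      ring
    have hCle : (∑ j, (wτ j * (t j - u0 j) - (η/2) * (wτ j)^2)) ≤ psiF ε η t u0 :=
      phi_le_psiF hε hη t u0 wτ (fun j => clampR_abs_le hε _)
    have hSτ : ∑ j, wτ j * d j ≤ 0 := by
      have h1 : τ * ∑ j, wτ j * d j ≤ 0 := by linarith
      by_contra hcon
      push_neg at hcon
      nlinarith
    have hlip : ∀ j, (w0 j - wτ j) * d j ≤ τ * (d j)^2 / η := by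
      intro j
      have hl := clampR_lip (ε := ε) ((t j - u0 j)/η) ((t j - uτ j)/η)
      have harg : (t j - u0 j)/η - (t j - uτ j)/η = τ * d j / η := by
        simp only [huτ]
        field_simp
        ring
      have habs : |w0 j - wτ j| ≤ τ * |d j| / η := by
        refine hl.trans ?_
        rw [harg, abs_div, abs_mul, abs_of_pos hτ0, abs_of_pos hη]
      calc (w0 j - wτ j) * d j ≤ |(w0 j - wτ j) * d j| := le_abs_self _
        _ = |w0 j - wτ j| * |d j| := abs_mul _ _
        _ ≤ (τ * |d j| / η) * |d j| := mul_le_mul_of_nonneg_right habs (abs_nonneg _)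
        _ = τ * (|d j|)^2 / η := by ring
        _ = τ * (d j)^2 / η := by rw [sq_abs]
    have hsplit : ∑ j, w0 j * d j
        = (∑ j, (w0 j - wτ j) * d j) + ∑ j, wτ j * d j := by
      rw [← Finset.sum_add_distrib]
      apply Finset.sum_congr rfl
      intro j _
      ring
    have hsum : ∑ j, (w0 j - wτ j) * d j ≤ τ * C := by
      calc ∑ j, (w0 j - wτ j) * d j ≤ ∑ j, τ * (d j)^2 / η :=
            Finset.sum_le_sum fun j _ => hlip j
        _ = τ * C := by
              simp only [hC, div_eq_mul_inv, ← Finset.sum_mul, ← Finset.mul_sum, mul_assoc]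
    linarith [hsplit, hsum, hSτ]
  have hfin : ∑ j, w0 j * d j ≤ 0 := aux_le_zero hC0 key
  have : ∑ j, w0 j * u j - ∑ j, w0 j * u0 j = ∑ j, w0 j * d j := by
    rw [← Finset.sum_sub_distrib]
    apply Finset.sum_congr rfl
    intro j _
    simp only [hd]
    ring
  linarith

/-- Duality for the proximal problem of
`g*(s) = ε · min_{u ∈ K} ‖s − u‖₁`:
`min_s ( g*(s) + (1/(2η))‖s − t‖₂² ) = max_{w ∈ [−ε,ε]ⁿ} ( −f(w) + ⟨w,t⟩ − (η/2)‖w‖₂² )`,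
with both optima attained, where `f` is the support function of the nonempty
compact convex set `K`. -/
theorem stmt10 (n : ℕ) (K : Set (Fin n → ℝ)) (hKne : K.Nonempty)
    (hKcomp : IsCompact K) (hKconv : Convex ℝ K)
    (ε : ℝ) (hε : 0 < ε) (η : ℝ) (hη : 0 < η)
    (f : (Fin n → ℝ) → ℝ)
    (hf : ∀ w : Fin n → ℝ, f w = sSup {x : ℝ | ∃ u ∈ K, x = ∑ j, w j * u j})
    (t : Fin n → ℝ) :
    ∃ p : ℝ,
      IsLeast {x : ℝ | ∃ s : Fin n → ℝ,
        x = ε * sInf {d : ℝ | ∃ u ∈ K, d = ∑ j, |s j - u j|}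
            + (1/(2*η)) * ∑ j, (s j - t j)^2} p ∧
      IsGreatest {x : ℝ | ∃ w : Fin n → ℝ, (∀ j, |w j| ≤ ε) ∧
        x = - f w + (∑ j, w j * t j) - (η/2) * ∑ j, (w j)^2} p := by
  classical
  obtain ⟨u0, hu0K, hu0min⟩ :=
    hKcomp.exists_isMinOn hKne (psiF_cont ε η t).continuousOn
  have hmin : ∀ u ∈ K, psiF ε η t u0 ≤ psiF ε η t u := fun u hu =>
    isMinOn_iff.mp hu0min u hu
  set w0 : Fin n → ℝ := fun j => clampR ε ((t j - u0 j)/η) with hw0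
  have hw0feas : ∀ j, |w0 j| ≤ ε := fun j => clampR_abs_le hε _
  have hVI : ∀ u ∈ K, ∑ j, w0 j * u j ≤ ∑ j, w0 j * u0 j := fun u hu =>
    VI_main hKconv hε hη t hu0K hmin hu
  set p : ℝ := ∑ j, (w0 j * (t j - u0 j) - (η/2) * (w0 j)^2) with hp
  have hppsi : p = psiF ε η t u0 := rfl
  -- facts about f
  have hsetimg : ∀ w : Fin n → ℝ,
      {x : ℝ | ∃ u ∈ K, x = ∑ j, w j * u j} = (fun u => ∑ j, w j * u j) '' K := by
    intro w
    ext x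
    simp [Set.mem_image, eq_comm]
  have hbdd : ∀ w : Fin n → ℝ, BddAbove {x : ℝ | ∃ u ∈ K, x = ∑ j, w j * u j} := by
    intro w
    rw [hsetimg w]
    exact (hKcomp.image
      (continuous_finset_sum _ fun j _ => continuous_const.mul (continuous_apply j))).bddAbove
  have hfle : ∀ w : Fin n → ℝ, ∑ j, w j * u0 j ≤ f w := by
    intro w
    rw [hf]
    exact le_csSup (hbdd w) ⟨u0, hu0K, rfl⟩
  have hfw0 : f w0 = ∑ j, w0 j * u0 j := by
    rw [hf]
    apply IsGreatest.csSup_eq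
    constructor
    · exact ⟨u0, hu0K, rfl⟩
    · rintro x ⟨u, hu, rfl⟩
      exact hVI u hu
  -- primal optimizer
  set s0 : Fin n → ℝ := fun j => t j - η * w0 j with hs0
  have hco : ∀ j, ε * |s0 j - u0 j| = w0 j * (s0 j - u0 j) := by
    intro j
    have h := coordEq hε hη (t j - u0 j)
    have e1 : s0 j - u0 j = (t j - u0 j) - η * clampR ε ((t j - u0 j)/η) := by
      simp only [hs0, hw0]
      ring
    rw [e1]
    exact h
  refine ⟨p, ⟨⟨s0, ?_⟩, ?_⟩, ⟨⟨w0, hw0feas, ?_⟩, ?_⟩⟩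
  · -- primal membership
    have hDleast : IsLeast {d : ℝ | ∃ u ∈ K, d = ∑ j, |s0 j - u j|}
        (∑ j, |s0 j - u0 j|) := by
      constructor
      · exact ⟨u0, hu0K, rfl⟩
      · rintro d ⟨u, hu, rfl⟩
        have h1 : ε * ∑ j, |s0 j - u0 j| = ∑ j, w0 j * (s0 j - u0 j) := by
          rw [Finset.mul_sum]
          exact Finset.sum_congr rfl fun j _ => hco j
        have h2 : ∑ j, w0 j * (s0 j - u j) ≤ ε * ∑ j, |s0 j - u j| := by
          rw [Finset.mul_sum]
          apply Finset.sum_le_sum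
          intro j _
          calc w0 j * (s0 j - u j) ≤ |w0 j * (s0 j - u j)| := le_abs_self _
            _ = |w0 j| * |s0 j - u j| := abs_mul _ _
            _ ≤ ε * |s0 j - u j| := mul_le_mul_of_nonneg_right (hw0feas j) (abs_nonneg _)
        have h3 : ∑ j, w0 j * (s0 j - u0 j)
            = (∑ j, w0 j * s0 j) - ∑ j, w0 j * u0 j := by
          rw [← Finset.sum_sub_distrib]
          exact Finset.sum_congr rfl fun j _ => by ring
        have h4 : ∑ j, w0 j * (s0 j - u j)
            = (∑ j, w0 j * s0 j) - ∑ j, w0 j * u j := by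
          rw [← Finset.sum_sub_distrib]
          exact Finset.sum_congr rfl fun j _ => by ring
        have h5 := hVI u hu
        have h6 : ε * ∑ j, |s0 j - u0 j| ≤ ε * ∑ j, |s0 j - u j| := by linarith
        exact le_of_mul_le_mul_left h6 hε
    rw [hDleast.csInf_eq]
    have h1 : ε * ∑ j, |s0 j - u0 j| = ∑ j, w0 j * (s0 j - u0 j) := by
      rw [Finset.mul_sum]
      exact Finset.sum_congr rfl fun j _ => hco j
    rw [h1, Finset.mul_sum, ← Finset.sum_add_distrib, hp]
    apply Finset.sum_congr rfl
    intro j _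
    have e2 : s0 j = t j - η * w0 j := rfl
    rw [e2]
    have hηne : η ≠ 0 := ne_of_gt hη
    field_simp
    ring
  · -- primal lower bound
    rintro x ⟨s, rfl⟩
    set q : ℝ := (1/(2*η)) * ∑ j, (s j - t j)^2 with hq
    have hbound : ∀ u ∈ K, p ≤ ε * (∑ j, |s j - u j|) + q := by
      intro u hu
      have h1 : p ≤ ∑ j, (w0 j * (t j - u j) - (η/2) * (w0 j)^2) := by
        have hdiff : (∑ j, (w0 j * (t j - u j) - (η/2) * (w0 j)^2)) - p
            = (∑ j, w0 j * u0 j) - ∑ j, w0 j * u j := by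
          rw [hp, ← Finset.sum_sub_distrib, ← Finset.sum_sub_distrib]
          exact Finset.sum_congr rfl fun j _ => by ring
        have := hVI u hu
        linarith
      have h2 : ∑ j, (w0 j * (t j - u j) - (η/2) * (w0 j)^2)
          ≤ ∑ j, (ε * |s j - u j| + (1/(2*η)) * (s j - t j)^2) := by
        apply Finset.sum_le_sum
        intro j _
        have h := coordW hε hη (t j - u j) (s j - u j) (w0 j) (hw0feas j)
        have e : ((s j - u j) - (t j - u j))^2 = (s j - t j)^2 := by ring
        rw [e] at h
        exact h
      rw [Finset.sum_add_distrib, ← Finset.mul_sum, ← Finset.mul_sum] at h2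
      rw [hq]
      linarith
    have hne' : {d : ℝ | ∃ u ∈ K, d = ∑ j, |s j - u j|}.Nonempty := ⟨_, u0, hu0K, rfl⟩
    have hlb : (p - q)/ε ≤ sInf {d : ℝ | ∃ u ∈ K, d = ∑ j, |s j - u j|} := by
      apply le_csInf hne'
      rintro d ⟨u, hu, rfl⟩
      rw [div_le_iff₀ hε]
      have := hbound u hu
      nlinarith
    have hmul := mul_le_mul_of_nonneg_left hlb hε.le
    rw [mul_div_cancel₀ _ (ne_of_gt hε)] at hmul
    linarith
  · -- dual membership value
    rw [hfw0]
    have : p = (∑ j, w0 j * t j) - (∑ j, w0 j * u0 j) - (η/2) * ∑ j, (w0 j)^2 := by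
      rw [hp, Finset.mul_sum, ← Finset.sum_sub_distrib, ← Finset.sum_sub_distrib]
      exact Finset.sum_congr rfl fun j _ => by ring
    linarith
  · -- dual upper bound
    rintro x ⟨w, hwfeas, rfl⟩
    have h1 := hfle w
    have h2 : ∑ j, (w j * (t j - u0 j) - (η/2) * (w j)^2) ≤ p := by
      rw [hp]
      apply Finset.sum_le_sum
      intro j _
      exact coordA hε hη (t j - u0 j) (w j) (hwfeas j)
    have h3 : ∑ j, (w j * (t j - u0 j) - (η/2) * (w j)^2)
        = (∑ j, w j * t j) - (∑ j, w j * u0 j) - (η/2) * ∑ j, (w j)^2 := by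
      rw [Finset.mul_sum, ← Finset.sum_sub_distrib, ← Finset.sum_sub_distrib]
      exact Finset.sum_congr rfl fun j _ => by ring
    linarith
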